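/- arXiv:1805.08885 — 3 statements merged into one kernel-verified Lean document; each statement's English description precedes it below -/
import Mathlib

section
/- Let n ≥ 1, fix λ, μ ∈ ℂ^n and indices 1 ≤ i, j ≤ n. If λ ∼ μ and λ̌_i = μ̌_j, then λ + ε_i ∼ μ + ε_j. -/
/-
Shared setup: weights for pe(n) are vectors in ℂⁿ (`Fin n → ℂ`), with 0-based indices
(the 1-based index i corresponds to the 0-based index i−1; since the dot action and the
shift λ̌ only involve differences of indices, the translation is verbatim).
`ε_k` is `Pi.single k 1`. The dot action is (w·λ)_i = λ_{w⁻¹ i} + i − w⁻¹ i; the integral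
Weyl group condition is that w·λ − λ has integer coordinates; `Sim` is the equivalence
closure (`Relation.EqvGen`) of the moves λ ↦ λ ± 2ε_k and λ ↦ w·λ for w ∈ W^λ.
-/

namespace PeBlocks

/-- The dot action of S_n on ℂⁿ : (w·λ)_i = λ_{w⁻¹ i} + i − w⁻¹ i. -/
noncomputable def dot {n : ℕ} (w : Equiv.Perm (Fin n)) (l : Fin n → ℂ) : Fin n → ℂ :=
  fun i => l (w⁻¹ i) + ((i : ℕ) : ℂ) - (((w⁻¹ i : Fin n) : ℕ) : ℂ)

/-- `w` lies in the integral Weyl group W^λ : w·λ − λ ∈ ℤⁿ. -/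
def InIntegralWeyl {n : ℕ} (w : Equiv.Perm (Fin n)) (l : Fin n → ℂ) : Prop :=
  ∀ i : Fin n, ∃ z : ℤ, dot w l i - l i = (z : ℂ)

/-- Generating moves of the equivalence relation ∼ : λ ∼ λ ± 2ε_k and λ ∼ w·λ for
w ∈ W^λ. -/
def Step {n : ℕ} (l m : Fin n → ℂ) : Prop :=
  (∃ k : Fin n, m = l + (2 : ℂ) • (Pi.single k 1 : Fin n → ℂ) ∨ m = l - (2 : ℂ) • (Pi.single k 1 : Fin n → ℂ)) ∨
  (∃ w : Equiv.Perm (Fin n), InIntegralWeyl w l ∧ m = dot w l)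

/-- The equivalence relation ∼ on ℂⁿ : the smallest equivalence relation containing the
generating moves. -/
def Sim {n : ℕ} : (Fin n → ℂ) → (Fin n → ℂ) → Prop := Relation.EqvGen Step
section Aux

variable {n : ℕ}

lemma sim_refl (l : Fin n → ℂ) : Sim l l := Relation.EqvGen.refl l

lemma sim_symm {l m : Fin n → ℂ} (h : Sim l m) : Sim m l := Relation.EqvGen.symm l m h

lemma sim_trans {a b c : Fin n → ℂ} (h1 : Sim a b) (h2 : Sim b c) : Sim a c :=
  Relation.EqvGen.trans a b c h1 h2

lemma sim_of_eq {a b b' : Fin n → ℂ} (h : Sim a b) (e : b = b') : Sim a b' := e ▸ h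

lemma sim_add_two (l : Fin n → ℂ) (k : Fin n) :
    Sim l (l + (2 : ℂ) • (Pi.single k 1 : Fin n → ℂ)) :=
  Relation.EqvGen.rel _ _ (Or.inl ⟨k, Or.inl rfl⟩)

lemma sim_sub_two (l : Fin n → ℂ) (k : Fin n) :
    Sim l (l - (2 : ℂ) • (Pi.single k 1 : Fin n → ℂ)) :=
  Relation.EqvGen.rel _ _ (Or.inl ⟨k, Or.inr rfl⟩)

lemma sim_add_zsmul (l : Fin n → ℂ) (k : Fin n) (t : ℤ) :
    Sim l (l + (2 * (t : ℂ)) • (Pi.single k 1 : Fin n → ℂ)) := by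
  induction t using Int.induction_on with
  | zero => simpa using sim_refl l
  | succ s ih =>
      refine sim_of_eq (sim_trans ih (sim_add_two _ k)) ?_
      push_cast
      module
  | pred s ih =>
      refine sim_of_eq (sim_trans ih (sim_sub_two _ k)) ?_
      push_cast
      module

/-- If λ̌_i = λ̌_j then λ + ε_i ∼ λ + ε_j (via the transposition (i j)). -/
lemma sim_single_eq (l : Fin n → ℂ) (i j : Fin n)
    (h : l i - ((i : ℕ) : ℂ) = l j - ((j : ℕ) : ℂ)) :
    Sim (l + (Pi.single i 1 : Fin n → ℂ)) (l + (Pi.single j 1 : Fin n → ℂ)) := by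
  by_cases hij : i = j
  · subst hij; exact sim_refl _
  · set w : Equiv.Perm (Fin n) := Equiv.swap i j with hw
    have hwinv : w⁻¹ = w := by simp [hw]
    have hdot : dot w (l + (Pi.single i 1 : Fin n → ℂ)) = l + (Pi.single j 1 : Fin n → ℂ) := by
      funext a
      simp only [dot, hwinv, Pi.add_apply]
      by_cases hai : a = i
      · subst hai
        rw [hw, Equiv.swap_apply_left]
        simp only [Pi.single_apply, if_neg (Ne.symm hij), if_neg hij, if_pos rfl]
        push_cast
        linear_combination -h
      · by_cases haj : a = j
        · subst haj
          rw [hw, Equiv.swap_apply_right]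
          simp only [Pi.single_apply, if_pos rfl]
          push_cast
          linear_combination h
        · rw [hw, Equiv.swap_apply_of_ne_of_ne hai haj]
          simp only [Pi.single_apply, if_neg hai, if_neg haj]
          ring
    have hint : InIntegralWeyl w (l + (Pi.single i 1 : Fin n → ℂ)) := by
      intro a
      rw [hdot]
      simp only [Pi.add_apply, Pi.single_apply]
      by_cases hai : a = i
      · refine ⟨-1, ?_⟩
        subst hai
        rw [if_pos rfl, if_neg hij]
        push_cast; ring
      · by_cases haj : a = j
        · refine ⟨1, ?_⟩
          subst haj
          rw [if_pos rfl, if_neg hai]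
          push_cast; ring
        · refine ⟨0, ?_⟩
          rw [if_neg hai, if_neg haj]
          push_cast; ring
    exact Relation.EqvGen.rel _ _ (Or.inr ⟨w, hint, hdot.symm⟩)

/-- If λ̌_i = λ̌_j + 2t for an integer t, then λ + ε_i ∼ λ + ε_j. -/
lemma sim_single_shift (l : Fin n → ℂ) (i j : Fin n) (t : ℤ)
    (h : l i - ((i : ℕ) : ℂ) = (l j - ((j : ℕ) : ℂ)) + 2 * (t : ℂ)) :
    Sim (l + (Pi.single i 1 : Fin n → ℂ)) (l + (Pi.single j 1 : Fin n → ℂ)) := by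
  by_cases hij : i = j
  · subst hij; exact sim_refl _
  · set l' : Fin n → ℂ := l - (2 * (t : ℂ)) • (Pi.single i 1 : Fin n → ℂ) with hl'
    have h1 : Sim (l + (Pi.single i 1 : Fin n → ℂ)) (l' + (Pi.single i 1 : Fin n → ℂ)) := by
      refine sim_of_eq (sim_add_zsmul (l + (Pi.single i 1 : Fin n → ℂ)) i (-t)) ?_
      rw [hl']
      push_cast
      module
    have h2 : Sim (l' + (Pi.single i 1 : Fin n → ℂ)) (l' + (Pi.single j 1 : Fin n → ℂ)) := by
      apply sim_single_eq
      rw [hl']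
      simp only [Pi.sub_apply, Pi.smul_apply, smul_eq_mul, Pi.single_eq_same,
        Pi.single_eq_of_ne (Ne.symm hij)]
      linear_combination h
    have h3 : Sim (l' + (Pi.single j 1 : Fin n → ℂ)) (l + (Pi.single j 1 : Fin n → ℂ)) := by
      refine sim_of_eq (sim_add_zsmul (l' + (Pi.single j 1 : Fin n → ℂ)) i t) ?_
      rw [hl']
      module
    exact sim_trans h1 (sim_trans h2 h3)

/-- The Weyl move is compatible with adding ε : λ + ε_{w⁻¹ j} ∼ w·λ + ε_j. -/
lemma sim_dot_single (w : Equiv.Perm (Fin n)) (l : Fin n → ℂ) (hw : InIntegralWeyl w l)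
    (j : Fin n) :
    Sim (l + (Pi.single (w⁻¹ j) 1 : Fin n → ℂ)) (dot w l + (Pi.single j 1 : Fin n → ℂ)) := by
  have hdot : dot w (l + (Pi.single (w⁻¹ j) 1 : Fin n → ℂ))
      = dot w l + (Pi.single j 1 : Fin n → ℂ) := by
    funext a
    simp only [dot, Pi.add_apply, Pi.single_apply]
    by_cases haj : a = j
    · subst haj
      simp only [if_pos rfl]
      ring
    · have hne : (w⁻¹ a : Fin n) ≠ w⁻¹ j := fun hc => haj (w⁻¹.injective hc)
      simp only [if_neg haj, if_neg hne]
      ring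
  have hint : InIntegralWeyl w (l + (Pi.single (w⁻¹ j) 1 : Fin n → ℂ)) := by
    intro a
    obtain ⟨z, hz⟩ := hw a
    by_cases h1 : a = j <;> by_cases h2 : a = (w⁻¹ j : Fin n)
    · refine ⟨z, ?_⟩
      rw [hdot]
      simp only [Pi.add_apply, Pi.single_apply, if_pos h1, if_pos h2]
      push_cast
      linear_combination hz
    · refine ⟨z + 1, ?_⟩
      rw [hdot]
      simp only [Pi.add_apply, Pi.single_apply, if_pos h1, if_neg h2]
      push_cast
      linear_combination hz
    · refine ⟨z - 1, ?_⟩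
      rw [hdot]
      simp only [Pi.add_apply, Pi.single_apply, if_neg h1, if_pos h2]
      push_cast
      linear_combination hz
    · refine ⟨z, ?_⟩
      rw [hdot]
      simp only [Pi.add_apply, Pi.single_apply, if_neg h1, if_neg h2]
      push_cast
      linear_combination hz
  exact Relation.EqvGen.rel _ _ (Or.inr ⟨w, hint, hdot.symm⟩)

lemma perm_inv_apply_self (w : Equiv.Perm (Fin n)) (a : Fin n) : w⁻¹ (w a) = a :=
  Equiv.Perm.inv_eq_iff_eq.mpr rfl

lemma dot_inv_dot (w : Equiv.Perm (Fin n)) (l : Fin n → ℂ) : dot w⁻¹ (dot w l) = l := by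
  funext a
  simp only [dot, inv_inv, perm_inv_apply_self]
  ring

lemma step_symm {l m : Fin n → ℂ} (h : Step l m) : Step m l := by
  rcases h with ⟨k, hk | hk⟩ | ⟨w, hw, hm⟩
  · exact Or.inl ⟨k, Or.inr (by rw [hk]; abel)⟩
  · exact Or.inl ⟨k, Or.inl (by rw [hk]; abel)⟩
  · refine Or.inr ⟨w⁻¹, ?_, ?_⟩
    · intro a
      obtain ⟨z, hz⟩ := hw a
      refine ⟨-z, ?_⟩
      rw [hm, dot_inv_dot]
      push_cast
      linear_combination -hz
    · rw [hm, dot_inv_dot]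

/-- The strengthened per-index statement used for the induction. -/
def Srel (l m : Fin n → ℂ) : Prop :=
  ∀ i : Fin n, ∃ j : Fin n, ∃ t : ℤ,
    l i - ((i : ℕ) : ℂ) = (m j - ((j : ℕ) : ℂ)) + 2 * (t : ℂ) ∧
    Sim (l + (Pi.single i 1 : Fin n → ℂ)) (m + (Pi.single j 1 : Fin n → ℂ))

lemma srel_of_step {l m : Fin n → ℂ} (h : Step l m) : Srel l m := by
  rcases h with ⟨k, hk | hk⟩ | ⟨w, hw, hm⟩
  · intro i
    subst hk
    by_cases hik : i = k
    · subst hik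
      refine ⟨i, -1, ?_, ?_⟩
      · simp only [Pi.add_apply, Pi.smul_apply, Pi.single_eq_same, smul_eq_mul]
        push_cast; ring
      · exact sim_of_eq (sim_add_two (l + (Pi.single i 1 : Fin n → ℂ)) i) (by module)
    · refine ⟨i, 0, ?_, ?_⟩
      · simp only [Pi.add_apply, Pi.smul_apply, Pi.single_eq_of_ne hik, smul_eq_mul]
        push_cast; ring
      · exact sim_of_eq (sim_add_two (l + (Pi.single i 1 : Fin n → ℂ)) k) (by module)
  · intro i
    subst hk
    by_cases hik : i = k
    · subst hik
      refine ⟨i, 1, ?_, ?_⟩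
      · simp only [Pi.sub_apply, Pi.smul_apply, Pi.single_eq_same, smul_eq_mul]
        push_cast; ring
      · exact sim_of_eq (sim_sub_two (l + (Pi.single i 1 : Fin n → ℂ)) i) (by module)
    · refine ⟨i, 0, ?_, ?_⟩
      · simp only [Pi.sub_apply, Pi.smul_apply, Pi.single_eq_of_ne hik, smul_eq_mul]
        push_cast; ring
      · exact sim_of_eq (sim_sub_two (l + (Pi.single i 1 : Fin n → ℂ)) k) (by module)
  · intro i
    subst hm
    refine ⟨w i, 0, ?_, ?_⟩
    · simp only [dot, perm_inv_apply_self]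
      push_cast; ring
    · have := sim_dot_single w l hw (w i)
      rwa [perm_inv_apply_self] at this

lemma srel_of_sim {l m : Fin n → ℂ} (h : Sim l m) : Srel l m ∧ Srel m l := by
  induction h with
  | rel a b hab => exact ⟨srel_of_step hab, srel_of_step (step_symm hab)⟩
  | refl a =>
      constructor <;>
      · intro i
        exact ⟨i, 0, by push_cast; ring, sim_refl _⟩
  | symm a b _ ih => exact ⟨ih.2, ih.1⟩
  | trans a b c _ _ ih1 ih2 =>
      constructor
      · intro i
        obtain ⟨k, t1, h1, s1⟩ := ih1.1 i
        obtain ⟨j, t2, h2, s2⟩ := ih2.1 k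
        exact ⟨j, t1 + t2, by push_cast; linear_combination h1 + h2, sim_trans s1 s2⟩
      · intro i
        obtain ⟨k, t1, h1, s1⟩ := ih2.2 i
        obtain ⟨j, t2, h2, s2⟩ := ih1.2 k
        exact ⟨j, t1 + t2, by push_cast; linear_combination h1 + h2, sim_trans s1 s2⟩

end Aux

/-
STATEMENT 5: Let n ≥ 1, λ, μ ∈ ℂⁿ and indices i, j. If λ ∼ μ and λ̌_i = μ̌_j, then
λ + ε_i ∼ μ + ε_j.  (0-based: λ̌_i = λ_i − i, so λ̌_i = μ̌_j reads λ_i − i = μ_j − j.)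
-/
theorem stmt5 (n : ℕ) (hn : 1 ≤ n) (l m : Fin n → ℂ) (i j : Fin n)
    (hsim : Sim l m)
    (hcheck : l i - ((i : ℕ) : ℂ) = m j - ((j : ℕ) : ℂ)) :
    Sim (l + (Pi.single i 1 : Fin n → ℂ)) (m + (Pi.single j 1 : Fin n → ℂ)) := by
  obtain ⟨S1, _⟩ := srel_of_sim hsim
  obtain ⟨j', t, h1, s1⟩ := S1 i
  have h2 : m j' - ((j' : ℕ) : ℂ) = (m j - ((j : ℕ) : ℂ)) + 2 * ((-t : ℤ) : ℂ) := by
    push_cast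
    linear_combination hcheck - h1
  exact sim_trans s1 (sim_single_shift m j' j (-t) h2)

end PeBlocks
end

section
/- Let n ≥ 1 and for 0 ≤ i ≤ n define ∂^i := i ε_1 + (i−1) ε_2 + ⋯ + 1·ε_i (i.e. ∂^i_j = i+1−j for j ≤ i and ∂^i_j = 0 for j > i). Then for every λ ∈ ℤ^n there exists exactly one index i ∈ {0, 1, …, n} such that λ ∼ ∂^i; in particular, the vectors ∂^0, ∂^1, …, ∂^n are pairwise inequivalent under ∼ and every integer weight is equivalent to one of them. -/
/-
Shared setup: weights for pe(n) are vectors in ℂⁿ (`Fin n → ℂ`), with 0-based indices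
(the 1-based index i corresponds to the 0-based index i−1; since the dot action and the
shift λ̌ only involve differences of indices, the translation is verbatim).
`ε_k` is `Pi.single k 1`. The dot action is (w·λ)_i = λ_{w⁻¹ i} + i − w⁻¹ i; the integral
Weyl group condition is that w·λ − λ has integer coordinates; `Sim` is the equivalence
closure (`Relation.EqvGen`) of the moves λ ↦ λ ± 2ε_k and λ ↦ w·λ for w ∈ W^λ.
-/

namespace PeBlocks

/-
STATEMENT 8: Let n ≥ 1 and, for 0 ≤ i ≤ n, let ∂^i = i ε_1 + (i−1) ε_2 + ⋯ + 1·ε_i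
(0-based: ∂^i_j = i − j for j < i, and 0 otherwise). Then every λ ∈ ℤⁿ is ∼-equivalent
to exactly one ∂^i with 0 ≤ i ≤ n.
-/

/-- ∂^i (0-based coordinates): ∂^i_j = i − j for j < i, 0 otherwise. -/
noncomputable def pd (n i : ℕ) : Fin n → ℂ :=
  fun j => if (j : ℕ) < i then ((i - (j : ℕ) : ℕ) : ℂ) else 0

/-! invariant -/

def OddAt {n : ℕ} (l : Fin n → ℂ) (j : Fin n) : Prop :=
  ∃ z : ℤ, l j - ((j : ℕ) : ℂ) = ((2 * z + 1 : ℤ) : ℂ)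

open Finset in
open scoped Classical in
noncomputable def cInv {n : ℕ} (l : Fin n → ℂ) : ℕ :=
  (Finset.univ.filter fun j => OddAt l j).card

lemma oddAt_iff_of_evenDiff {n : ℕ} {l m : Fin n → ℂ} {j : Fin n}
    (h : ∃ y : ℤ, m j - l j = ((2 * y : ℤ) : ℂ)) : (OddAt m j ↔ OddAt l j) := by
  obtain ⟨y, hy⟩ := h
  constructor
  · rintro ⟨z, hz⟩
    exact ⟨z - y, by push_cast at hz hy ⊢; linear_combination hz - hy⟩
  · rintro ⟨z, hz⟩
    exact ⟨z + y, by push_cast at hz hy ⊢; linear_combination hz + hy⟩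

lemma oddAt_dot {n : ℕ} (w : Equiv.Perm (Fin n)) (l : Fin n → ℂ) (i : Fin n) :
    OddAt (dot w l) i ↔ OddAt l (w⁻¹ i) := by
  unfold OddAt dot
  constructor <;> rintro ⟨z, hz⟩ <;> exact ⟨z, by linear_combination hz⟩

lemma cInv_dot {n : ℕ} (w : Equiv.Perm (Fin n)) (l : Fin n → ℂ) :
    cInv (dot w l) = cInv l := by
  classical
  unfold cInv
  apply Finset.card_bij' (fun i _ => w⁻¹ i) (fun j _ => w j)
  · intro i hi
    simp only [Finset.mem_filter, Finset.mem_univ, true_and] at hi ⊢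
    exact (oddAt_dot w l i).1 hi
  · intro j hj
    simp only [Finset.mem_filter, Finset.mem_univ, true_and] at hj ⊢
    rw [oddAt_dot]
    simpa using hj
  · intro i _; simp
  · intro j _; simp

lemma cInv_congr {n : ℕ} {l m : Fin n → ℂ} (h : ∀ j, OddAt l j ↔ OddAt m j) :
    cInv l = cInv m := by
  classical
  unfold cInv
  exact congrArg Finset.card (Finset.filter_congr fun j _ => h j)

lemma cInv_step {n : ℕ} {l m : Fin n → ℂ} (h : Step l m) : cInv l = cInv m := by
  classical
  rcases h with ⟨k, hk | hk⟩ | ⟨w, _, hw⟩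
  · refine cInv_congr fun j => (oddAt_iff_of_evenDiff ⟨if j = k then 1 else 0, ?_⟩).symm
    subst hk
    simp only [Pi.add_apply, Pi.smul_apply, Pi.single_apply, smul_eq_mul]
    split <;> push_cast <;> ring
  · refine cInv_congr fun j => (oddAt_iff_of_evenDiff ⟨if j = k then -1 else 0, ?_⟩).symm
    subst hk
    simp only [Pi.sub_apply, Pi.smul_apply, Pi.single_apply, smul_eq_mul]
    split <;> push_cast <;> ring
  · rw [hw, cInv_dot]

lemma cInv_sim {n : ℕ} {l m : Fin n → ℂ} (h : Sim l m) : cInv l = cInv m := by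
  induction h with
  | rel _ _ h => exact cInv_step h
  | refl => rfl
  | symm _ _ _ ih => exact ih.symm
  | trans _ _ _ _ _ ih1 ih2 => exact ih1.trans ih2

/-! constructive moves -/

lemma sim_update {n : ℕ} (l : Fin n → ℂ) (k : Fin n) (z : ℤ) :
    Sim l (Function.update l k (l k + ((2 * z : ℤ) : ℂ))) := by
  induction z using Int.induction_on with
  | zero => simp; exact Relation.EqvGen.refl l
  | succ i ih =>
      refine Relation.EqvGen.trans _ _ _ ih (Relation.EqvGen.rel _ _ (Or.inl ⟨k, Or.inl ?_⟩))
      funext j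
      by_cases hj : j = k
      · subst hj
        simp [Function.update_self, Pi.single_apply]
        push_cast; ring
      · simp [Function.update_of_ne hj, Pi.single_apply, hj]
  | pred i ih =>
      refine Relation.EqvGen.trans _ _ _ ih (Relation.EqvGen.rel _ _ (Or.inl ⟨k, Or.inr ?_⟩))
      funext j
      by_cases hj : j = k
      · subst hj
        simp [Function.update_self, Pi.single_apply]
        push_cast; ring
      · simp [Function.update_of_ne hj, Pi.single_apply, hj]

lemma sim_of_evenDiff_on {n : ℕ} (s : Finset (Fin n)) :
    ∀ l m : Fin n → ℂ, (∀ j, ∃ z : ℤ, m j - l j = ((2 * z : ℤ) : ℂ)) →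
      (∀ j ∉ s, m j = l j) → Sim l m := by
  classical
  induction s using Finset.induction with
  | empty =>
      intro l m _ h
      have : m = l := funext fun j => h j (by simp)
      rw [this]; exact Relation.EqvGen.refl l
  | @insert k s hk ih =>
      intro l m hdiff hout
      obtain ⟨z, hz⟩ := hdiff k
      have hmk : m k = l k + ((2 * z : ℤ) : ℂ) := by linear_combination hz
      set l' := Function.update l k (l k + ((2 * z : ℤ) : ℂ)) with hl'
      refine Relation.EqvGen.trans _ _ _ (sim_update l k z) (ih l' m ?_ ?_)
      · intro j
        by_cases hj : j = k
        · subst hj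
          exact ⟨0, by simp [hl', Function.update_self, hmk]⟩
        · obtain ⟨y, hy⟩ := hdiff j
          exact ⟨y, by rw [hl', Function.update_of_ne hj]; exact hy⟩
      · intro j hj
        by_cases hjk : j = k
        · subst hjk; simp [hl', Function.update_self, hmk]
        · rw [hl', Function.update_of_ne hjk]
          exact hout j (by simp [hjk, hj])

lemma sim_of_evenDiff {n : ℕ} {l m : Fin n → ℂ}
    (h : ∀ j, ∃ z : ℤ, m j - l j = ((2 * z : ℤ) : ℂ)) : Sim l m :=
  sim_of_evenDiff_on Finset.univ l m h (by simp)

def IsInt {n : ℕ} (l : Fin n → ℂ) : Prop := ∀ j, ∃ z : ℤ, l j = (z : ℂ)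

lemma sim_dot_of_int {n : ℕ} {l : Fin n → ℂ} (hl : IsInt l) (w : Equiv.Perm (Fin n)) :
    Sim l (dot w l) := by
  refine Relation.EqvGen.rel _ _ (Or.inr ⟨w, fun i => ?_, rfl⟩)
  obtain ⟨z1, hz1⟩ := hl (w⁻¹ i)
  obtain ⟨z2, hz2⟩ := hl i
  exact ⟨z1 + (i : ℕ) - ((w⁻¹ i : Fin n) : ℕ) - z2, by unfold dot; push_cast; linear_combination hz1 - hz2⟩


/-! counting -/

lemma card_fin_filter {n : ℕ} (Q : ℕ → Prop) [DecidablePred Q] :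
    ((Finset.univ : Finset (Fin n)).filter fun j => Q j.val).card
      = ((Finset.range n).filter Q).card := by
  refine Finset.card_bij' (fun j _ => j.val)
    (fun a ha => (⟨a, by simpa using (Finset.mem_filter.1 ha).1⟩ : Fin n)) ?_ ?_ ?_ ?_
  · intro j hj
    simp only [Finset.mem_filter, Finset.mem_univ, true_and] at hj
    simp [hj, j.isLt]
  · intro a ha
    simp only [Finset.mem_filter, Finset.mem_range] at ha
    simp [ha.2]
  · intro j _; simp
  · intro a _; simp

lemma cInv_eq_card {n : ℕ} (l : Fin n → ℂ) (Q : ℕ → Prop) [DecidablePred Q]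
    (h : ∀ j : Fin n, OddAt l j ↔ Q j.val) :
    cInv l = ((Finset.range n).filter Q).card := by
  classical
  rw [← card_fin_filter]
  unfold cInv
  refine Finset.card_bij' (fun j _ => j) (fun j _ => j) ?_ ?_ ?_ ?_
  · intro j hj
    simp only [Finset.mem_filter, Finset.mem_univ, true_and] at hj ⊢
    exact (h j).1 hj
  · intro j hj
    simp only [Finset.mem_filter, Finset.mem_univ, true_and] at hj ⊢
    exact (h j).2 hj
  · intro j _; rfl
  · intro j _; rfl

lemma card_odd_range (m : ℕ) :
    ((Finset.range m).filter fun j => j % 2 = 1).card = m / 2 := by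
  induction m with
  | zero => simp
  | succ m ih =>
      rw [Finset.range_add_one, Finset.filter_insert]
      by_cases h : m % 2 = 1
      · rw [if_pos h, Finset.card_insert_of_notMem (by simp), ih]
        omega
      · rw [if_neg h, ih]
        omega

lemma card_lt_range (c m : ℕ) :
    ((Finset.range m).filter fun j => j < c).card = min c m := by
  have : (Finset.range m).filter (fun j => j < c) = Finset.range (min c m) := by
    ext a; simp; omega
  rw [this, Finset.card_range]

/-! normal forms -/

noncomputable def nf (n c : ℕ) : Fin n → ℂ :=
  fun j => ((j : ℕ) : ℂ) + (if (j : ℕ) < c then 1 else 0)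

lemma isInt_nf (n c : ℕ) : IsInt (nf n c) := by
  intro j
  unfold nf
  split
  · exact ⟨(j : ℕ) + 1, by push_cast; ring⟩
  · exact ⟨(j : ℕ), by push_cast; ring⟩

lemma oddAt_nf {n c : ℕ} (j : Fin n) : OddAt (nf n c) j ↔ (j : ℕ) < c := by
  unfold OddAt nf
  constructor
  · rintro ⟨z, hz⟩
    by_contra h
    rw [if_neg h] at hz
    have h0 : ((0 : ℤ) : ℂ) = ((2 * z + 1 : ℤ) : ℂ) := by
      push_cast at hz ⊢; linear_combination hz
    have := Int.cast_injective (α := ℂ) h0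
    omega
  · intro h
    exact ⟨0, by rw [if_pos h]; push_cast; ring⟩

lemma cInv_nf {n c : ℕ} (h : c ≤ n) : cInv (nf n c) = c := by
  classical
  rw [cInv_eq_card (nf n c) (fun a => a < c) (fun j => oddAt_nf j), card_lt_range]
  omega

lemma cInv_le {n : ℕ} (l : Fin n → ℂ) : cInv l ≤ n := by
  classical
  calc cInv l ≤ (Finset.univ : Finset (Fin n)).card := Finset.card_filter_le _ _
  _ = n := by simp

lemma sim_nf {n : ℕ} {l : Fin n → ℂ} (hl : IsInt l) : Sim l (nf n (cInv l)) := by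
  classical
  set c := cInv l with hc
  set l' : Fin n → ℂ := fun j => ((j : ℕ) : ℂ) + (if OddAt l j then 1 else 0) with hl'
  have hevd : ∀ j, ∃ y : ℤ, l' j - l j = ((2 * y : ℤ) : ℂ) := by
    intro j
    obtain ⟨z, hz⟩ := hl j
    by_cases h : OddAt l j
    · obtain ⟨y, hy⟩ := id h
      refine ⟨-y, ?_⟩
      simp only [hl', if_pos h]
      push_cast at hy ⊢
      linear_combination -hy
    · have hev : ∃ y : ℤ, z - (j : ℕ) = 2 * y := by
        rcases Int.even_or_odd (z - (j : ℕ)) with ⟨y, hy⟩ | ⟨y, hy⟩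
        · exact ⟨y, by omega⟩
        · refine absurd ⟨y, ?_⟩ h
          rw [hz]
          rw [show z = 2 * y + 1 + (j : ℕ) from by omega]
          push_cast
          ring
      obtain ⟨y, hy⟩ := hev
      refine ⟨-y, ?_⟩
      simp only [hl', if_neg h]
      have hyc : (z : ℂ) - ((j : ℕ) : ℂ) = ((2 * y : ℤ) : ℂ) := by
        exact_mod_cast congrArg (Int.cast : ℤ → ℂ) hy
      push_cast at hyc ⊢
      linear_combination -hz - hyc
  have hll' : Sim l l' := sim_of_evenDiff hevd
  have hoddl' : ∀ j, OddAt l' j ↔ OddAt l j := fun j => oddAt_iff_of_evenDiff (hevd j)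
  have hcl' : cInv l' = c := cInv_congr hoddl'
  have hint' : IsInt l' := by
    intro j
    by_cases h : OddAt l j
    · exact ⟨(j : ℕ) + 1, by simp only [hl', if_pos h]; push_cast; ring⟩
    · exact ⟨(j : ℕ), by simp only [hl', if_neg h]; push_cast; ring⟩
  have hcn : c ≤ n := hc ▸ cInv_le l
  have hpcard : ((Finset.univ : Finset (Fin n)).filter fun x => OddAt l' x).card = c := by
    rw [← hcl']
    unfold cInv
    refine Finset.card_bij' (fun j _ => j) (fun j _ => j) ?_ ?_ ?_ ?_
    · intro j hj
      simp only [Finset.mem_filter, Finset.mem_univ, true_and] at hj ⊢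
      exact hj
    · intro j hj
      simp only [Finset.mem_filter, Finset.mem_univ, true_and] at hj ⊢
      exact hj
    · intro j _; rfl
    · intro j _; rfl
  have hqcard : ((Finset.univ : Finset (Fin n)).filter fun x : Fin n => x.val < c).card = c := by
    rw [card_fin_filter (fun a => a < c), card_lt_range]
    omega
  have hcard1 : Fintype.card {x : Fin n // OddAt l' x} = Fintype.card {x : Fin n // x.val < c} := by
    rw [Fintype.card_subtype, Fintype.card_subtype, hpcard, hqcard]
  have hcard2 : Fintype.card {x : Fin n // ¬ OddAt l' x} = Fintype.card {x : Fin n // ¬ x.val < c} := by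
    rw [Fintype.card_subtype_compl, Fintype.card_subtype_compl, hcard1]
  let e1 : {x : Fin n // OddAt l' x} ≃ {x : Fin n // x.val < c} := Fintype.equivOfCardEq hcard1
  let e2 : {x : Fin n // ¬ OddAt l' x} ≃ {x : Fin n // ¬ x.val < c} := Fintype.equivOfCardEq hcard2
  let w : Equiv.Perm (Fin n) :=
    ((Equiv.sumCompl (fun x => OddAt l' x)).symm.trans
      ((e1.sumCongr e2).trans (Equiv.sumCompl (fun x : Fin n => x.val < c))))
  have hw : ∀ x, (w x).val < c ↔ OddAt l' x := by
    intro x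
    by_cases h : OddAt l' x
    · simp only [w, Equiv.trans_apply, Equiv.sumCompl_symm_apply_of_pos h,
        Equiv.sumCongr_apply, Sum.map_inl, Equiv.sumCompl_apply_inl]
      exact iff_of_true (e1 ⟨x, h⟩).2 h
    · simp only [w, Equiv.trans_apply, Equiv.sumCompl_symm_apply_of_neg h,
        Equiv.sumCongr_apply, Sum.map_inr, Equiv.sumCompl_apply_inr]
      exact iff_of_false (e2 ⟨x, h⟩).2 h
  have hdot : dot w l' = nf n c := by
    funext i
    have key : OddAt l' (w⁻¹ i) ↔ (i : ℕ) < c := by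
      rw [← hw (w⁻¹ i), show w (w⁻¹ i) = i from w.apply_symm_apply i]
    have key2 : OddAt l (w⁻¹ i) ↔ (i : ℕ) < c := (hoddl' _).symm.trans key
    unfold dot nf
    simp only [hl']
    rw [if_congr key2 rfl rfl]
    ring
  exact Relation.EqvGen.trans _ _ _ hll' (hdot ▸ sim_dot_of_int hint' w)

/-! pd computations -/

lemma oddAt_iff_int {n : ℕ} {l : Fin n → ℂ} {j : Fin n} (v : ℤ)
    (hv : l j - ((j : ℕ) : ℂ) = (v : ℂ)) : OddAt l j ↔ v % 2 = 1 := by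
  unfold OddAt
  constructor
  · rintro ⟨z, hz⟩
    have h1 : (v : ℂ) = ((2 * z + 1 : ℤ) : ℂ) := by rw [← hv]; exact hz
    have := Int.cast_injective (α := ℂ) h1
    omega
  · intro h
    refine ⟨(v - 1) / 2, ?_⟩
    rw [hv]
    exact_mod_cast congrArg (Int.cast : ℤ → ℂ) (by omega : v = 2 * ((v - 1) / 2) + 1)

lemma isInt_pd (n i : ℕ) : IsInt (pd n i) := by
  intro j
  unfold pd
  split
  · exact ⟨(i - (j : ℕ) : ℕ), by push_cast [Int.cast_natCast]; norm_num⟩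
  · exact ⟨0, by norm_num⟩

lemma oddAt_pd {n i : ℕ} (j : Fin n) :
    OddAt (pd n i) j ↔ (if (j : ℕ) < i then i % 2 = 1 else (j : ℕ) % 2 = 1) := by
  by_cases hj : (j : ℕ) < i
  · rw [if_pos hj]
    have hv : pd n i j - ((j : ℕ) : ℂ) = (((i : ℤ) - 2 * (j : ℕ) : ℤ) : ℂ) := by
      unfold pd
      rw [if_pos hj, Nat.cast_sub hj.le]
      push_cast
      ring
    rw [oddAt_iff_int _ hv]
    omega
  · rw [if_neg hj]
    have hv : pd n i j - ((j : ℕ) : ℂ) = ((-(j : ℕ) : ℤ) : ℂ) := by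
      unfold pd
      rw [if_neg hj]
      push_cast
      ring
    rw [oddAt_iff_int _ hv]
    omega

lemma cInv_pd {n i : ℕ} (h : i ≤ n) :
    cInv (pd n i) = (if i % 2 = 1 then i else 0) + (n / 2 - i / 2) := by
  classical
  rw [cInv_eq_card (pd n i) (fun a => if a < i then i % 2 = 1 else a % 2 = 1)
    (fun j => oddAt_pd j)]
  rw [Finset.card_filter, Finset.range_eq_Ico,
    ← Finset.sum_Ico_consecutive _ (Nat.zero_le i) h]
  have h1 : (∑ a ∈ Finset.Ico 0 i,
      if (if a < i then i % 2 = 1 else a % 2 = 1) then 1 else 0)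
      = (if i % 2 = 1 then i else 0) := by
    have e : (∑ a ∈ Finset.Ico 0 i,
        if (if a < i then i % 2 = 1 else a % 2 = 1) then 1 else 0)
        = ∑ _a ∈ Finset.Ico 0 i, (if i % 2 = 1 then 1 else 0) :=
      Finset.sum_congr rfl (fun a ha => by simp [(Finset.mem_Ico.1 ha).2])
    rw [e, Finset.sum_const, Nat.card_Ico, smul_eq_mul]
    split_ifs <;> omega
  have hodd : ∀ m : ℕ, (∑ a ∈ Finset.Ico 0 m, if a % 2 = 1 then 1 else 0) = m / 2 := by
    intro m
    rw [← Finset.range_eq_Ico, ← Finset.card_filter, card_odd_range]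
  have h2 : (∑ a ∈ Finset.Ico i n,
      if (if a < i then i % 2 = 1 else a % 2 = 1) then 1 else 0)
      = n / 2 - i / 2 := by
    have e : (∑ a ∈ Finset.Ico i n,
        if (if a < i then i % 2 = 1 else a % 2 = 1) then 1 else 0)
        = ∑ a ∈ Finset.Ico i n, (if a % 2 = 1 then 1 else 0) :=
      Finset.sum_congr rfl (fun a ha => by
        simp only [if_neg (by have := (Finset.mem_Ico.1 ha).1; omega : ¬ a < i)])
    rw [e]
    have hsplit := Finset.sum_Ico_consecutive
      (fun a => if a % 2 = 1 then 1 else 0) (Nat.zero_le i) h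
    beta_reduce at hsplit
    rw [hodd i, hodd n] at hsplit
    have : i / 2 ≤ n / 2 := Nat.div_le_div_right h
    omega
  rw [h1, h2]

lemma phi_exists (n c : ℕ) (hc : c ≤ n) :
    ∃ i : ℕ, i ≤ n ∧ (if i % 2 = 1 then i else 0) + (n / 2 - i / 2) = c := by
  by_cases h : c ≤ n / 2
  · refine ⟨2 * (n / 2 - c), ?_, ?_⟩
    · omega
    · split_ifs <;> omega
  · refine ⟨2 * (c - n / 2) - 1, ?_, ?_⟩
    · omega
    · split_ifs <;> omega

lemma phi_inj {n i y : ℕ} (hi : i ≤ n) (hy : y ≤ n)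
    (h : (if i % 2 = 1 then i else 0) + (n / 2 - i / 2)
        = (if y % 2 = 1 then y else 0) + (n / 2 - y / 2)) : i = y := by
  split_ifs at h <;> omega

theorem stmt8 (n : ℕ) (hn : 1 ≤ n) (l : Fin n → ℂ)
    (hl : ∀ j : Fin n, ∃ z : ℤ, l j = (z : ℂ)) :
    ∃! i : ℕ, i ≤ n ∧ Sim l (pd n i) := by
  have hcn : cInv l ≤ n := cInv_le l
  obtain ⟨i, hi, hφ⟩ := phi_exists n (cInv l) hcn
  have hsimpd : ∀ k : ℕ, k ≤ n → Sim (pd n k) (nf n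
      ((if k % 2 = 1 then k else 0) + (n / 2 - k / 2))) := by
    intro k hk
    have := sim_nf (isInt_pd n k)
    rwa [cInv_pd hk] at this
  refine ⟨i, ⟨hi, ?_⟩, ?_⟩
  · have h1 : Sim l (nf n (cInv l)) := sim_nf hl
    have h2 := hsimpd i hi
    rw [hφ] at h2
    exact Relation.EqvGen.trans _ _ _ h1 (Relation.EqvGen.symm _ _ h2)
  · rintro y ⟨hy, hsim⟩
    have h3 : cInv l = cInv (pd n y) := cInv_sim hsim
    rw [cInv_pd hy] at h3
    exact phi_inj hy hi (by rw [← h3, hφ])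

end PeBlocks
end

section
/- Let n ≥ 1 and let λ ∈ ℂ^n be generic in the sense that λ_i − λ_j ∉ ℤ for all 1 ≤ i ≠ j ≤ n. Then for μ ∈ ℂ^n one has λ ∼ μ if and only if μ − λ ∈ 2ℤ^n, i.e. every coordinate of μ − λ is an even integer. In other words, the equivalence class of a generic λ is exactly λ + 2ℤ^n. -/
/-
Shared setup: weights for pe(n) are vectors in ℂⁿ (`Fin n → ℂ`), with 0-based indices
(the 1-based index i corresponds to the 0-based index i−1; since the dot action and the
shift λ̌ only involve differences of indices, the translation is verbatim).
`ε_k` is `Pi.single k 1`. The dot action is (w·λ)_i = λ_{w⁻¹ i} + i − w⁻¹ i; the integral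
Weyl group condition is that w·λ − λ has integer coordinates; `Sim` is the equivalence
closure (`Relation.EqvGen`) of the moves λ ↦ λ ± 2ε_k and λ ↦ w·λ for w ∈ W^λ.
-/

namespace PeBlocks

-- Lemma A: if μ differs from a generic l by integers coordinatewise, then for any w in
-- the integral Weyl group of μ, dot w μ = μ.
lemma dot_eq_self {n : ℕ} (l : Fin n → ℂ)
    (hgen : ∀ i j : Fin n, i ≠ j → ∀ z : ℤ, l i - l j ≠ (z : ℂ))
    (μ : Fin n → ℂ) (hint : ∀ i, ∃ z : ℤ, μ i - l i = (z : ℂ))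
    (w : Equiv.Perm (Fin n)) (hw : InIntegralWeyl w μ) : dot w μ = μ := by
  have key : ∀ i : Fin n, w⁻¹ i = i := by
    intro i
    by_contra hne
    obtain ⟨z, hz⟩ := hw i
    obtain ⟨a, ha⟩ := hint (w⁻¹ i)
    obtain ⟨b, hb⟩ := hint i
    apply hgen (w⁻¹ i) i hne (z - (i : ℤ) + ((w⁻¹ i : Fin n) : ℤ) - a + b)
    have : μ (w⁻¹ i) + ((i : ℕ) : ℂ) - (((w⁻¹ i : Fin n) : ℕ) : ℂ) - μ i = (z : ℂ) := hz
    push_cast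
    have hμl : μ (w⁻¹ i) = l (w⁻¹ i) + (a : ℂ) := by linear_combination ha
    have hμl' : μ i = l i + (b : ℂ) := by linear_combination hb
    rw [hμl, hμl'] at this
    linear_combination this
  funext i
  simp only [dot, key i]
  ring

lemma sim_add {n : ℕ} (l μ : Fin n → ℂ) (h : Sim l μ) (k : Fin n) (z : ℤ) :
    Sim l (μ + ((2 * z : ℤ) : ℂ) • (Pi.single k 1 : Fin n → ℂ)) := by
  induction z using Int.induction_on with
  | zero => simpa using h
  | succ m ih =>
      refine Relation.EqvGen.trans _ _ _ ih (Relation.EqvGen.rel _ _ ?_)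
      left
      refine ⟨k, Or.inl ?_⟩
      funext i
      simp only [Pi.add_apply, Pi.smul_apply, smul_eq_mul]
      push_cast
      ring
  | pred m ih =>
      refine Relation.EqvGen.trans _ _ _ ih (Relation.EqvGen.rel _ _ ?_)
      left
      refine ⟨k, Or.inr ?_⟩
      funext i
      simp only [Pi.add_apply, Pi.sub_apply, Pi.smul_apply, smul_eq_mul]
      push_cast
      ring


/-
STATEMENT 9: Let n ≥ 1 and λ ∈ ℂⁿ generic (λ_i − λ_j ∉ ℤ for all i ≠ j). Then for
μ ∈ ℂⁿ: λ ∼ μ iff every coordinate of μ − λ is an even integer, i.e. the equivalence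
class of λ is exactly λ + 2ℤⁿ.
-/
theorem stmt9 (n : ℕ) (hn : 1 ≤ n) (l : Fin n → ℂ)
    (hgen : ∀ i j : Fin n, i ≠ j → ∀ z : ℤ, l i - l j ≠ (z : ℂ)) (m : Fin n → ℂ) :
    Sim l m ↔ ∀ i : Fin n, ∃ z : ℤ, m i - l i = ((2 * z : ℤ) : ℂ) := by
  set P : (Fin n → ℂ) → Prop := fun μ => ∀ i : Fin n, ∃ z : ℤ, μ i - l i = ((2 * z : ℤ) : ℂ)
    with hP
  have stepIff : ∀ μ ν : Fin n → ℂ, Step μ ν → (P μ ↔ P ν) := by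
    intro μ ν hs
    rcases hs with ⟨k, hk | hk⟩ | ⟨w, hw, hν⟩
    · subst hk
      constructor
      · intro h i
        obtain ⟨z, hz⟩ := h i
        by_cases hik : i = k
        · exact ⟨z + 1, by subst hik; simp only [Pi.add_apply, Pi.smul_apply, smul_eq_mul, Pi.single_eq_same]; push_cast at hz ⊢; linear_combination hz⟩
        · exact ⟨z, by simp [Pi.single_apply, hik]; push_cast at hz ⊢; linear_combination hz⟩
      · intro h i
        obtain ⟨z, hz⟩ := h i
        simp only [Pi.add_apply, Pi.smul_apply, smul_eq_mul] at hz
        by_cases hik : i = k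
        · exact ⟨z - 1, by subst hik; simp [Pi.single_apply] at hz; push_cast at hz ⊢; linear_combination hz⟩
        · exact ⟨z, by simp [Pi.single_apply, hik] at hz; push_cast at hz ⊢; linear_combination hz⟩
    · subst hk
      constructor
      · intro h i
        obtain ⟨z, hz⟩ := h i
        by_cases hik : i = k
        · exact ⟨z - 1, by subst hik; simp only [Pi.sub_apply, Pi.smul_apply, smul_eq_mul, Pi.single_eq_same]; push_cast at hz ⊢; linear_combination hz⟩
        · exact ⟨z, by simp [Pi.single_apply, hik]; push_cast at hz ⊢; linear_combination hz⟩
      · intro h i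
        obtain ⟨z, hz⟩ := h i
        simp only [Pi.sub_apply, Pi.smul_apply, smul_eq_mul] at hz
        by_cases hik : i = k
        · exact ⟨z + 1, by subst hik; simp [Pi.single_apply] at hz; push_cast at hz ⊢; linear_combination hz⟩
        · exact ⟨z, by simp [Pi.single_apply, hik] at hz; push_cast at hz ⊢; linear_combination hz⟩
    · subst hν
      constructor
      · intro h
        have hμint : ∀ i, ∃ z : ℤ, μ i - l i = (z : ℂ) := by
          intro i; obtain ⟨z, hz⟩ := h i; exact ⟨2 * z, hz⟩
        rw [dot_eq_self l hgen μ hμint w hw]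
        exact h
      · intro h
        have hμint : ∀ i, ∃ z : ℤ, μ i - l i = (z : ℂ) := by
          intro i
          obtain ⟨z, hz⟩ := hw i
          obtain ⟨a, ha⟩ := h i
          exact ⟨2 * a - z, by push_cast at ha hz ⊢; linear_combination ha - hz⟩
        rw [show P μ = P (dot w μ) from congrArg P (dot_eq_self l hgen μ hμint w hw).symm]
        exact h
  have eqvIff : ∀ μ ν : Fin n → ℂ, Sim μ ν → (P μ ↔ P ν) := by
    intro μ ν h
    induction h with
    | rel _ _ hs => exact stepIff _ _ hs
    | refl _ => exact Iff.rfl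
    | symm _ _ _ ih => exact ih.symm
    | trans _ _ _ _ _ ih1 ih2 => exact ih1.trans ih2
  constructor
  · intro h
    exact ((eqvIff l m h).mp (fun i => ⟨0, by simp⟩))
  · intro h
    -- choose the integers
    choose z hz using h
    have key : ∀ s : Finset (Fin n), Sim l (fun i => if i ∈ s then m i else l i) := by
      intro s
      induction s using Finset.induction_on with
      | empty => simp; exact Relation.EqvGen.refl l
      | @insert k s hk ih =>
          have := sim_add l _ ih k (z k)
          convert this using 1
          funext i
          simp only [Pi.add_apply, Pi.smul_apply, smul_eq_mul, Finset.mem_insert]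
          by_cases hik : i = k
          · subst hik
            simp only [hk, if_true, if_false, true_or, Pi.single_eq_same, mul_one]
            push_cast
            have := hz i
            push_cast at this
            linear_combination this
          · simp [hik, Pi.single_apply]
    have := key Finset.univ
    simpa using this

end PeBlocks
end
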